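/- arXiv:2307.00373 — 4 statements merged into one kernel-verified Lean document; each statement's English description precedes it below -/
import Mathlib

section
/- Let S ⊂ R^d be compact with volume function V(r) = μ(B(S,r)). If A ⊆ S is finite with empirical volume V_n(r) = μ(B(A,r)), then for s ≥ 2·d_H(S,A) one has 0 ≤ V(s) - V_n(s) ≤ V(s) - V(s - max_{p ∈ ∂S} d(p,A)). -/
open Metric Set MeasureTheory

theorem stmt1 {d : ℕ} (S A : Set (EuclideanSpace ℝ (Fin d)))
    (hS : IsCompact S) (hSne : S.Nonempty) (hA : A.Finite) (hAne : A.Nonempty)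
    (hAS : A ⊆ S)
    (V Vn : ℝ → ℝ)
    (hV : ∀ r, V r = (volume (cthickening r S)).toReal)
    (hVn : ∀ r, Vn r = (volume (cthickening r A)).toReal)
    (s : ℝ) (hs : 2 * hausdorffDist S A ≤ s) :
    0 ≤ V s - Vn s ∧
      V s - Vn s ≤
        V s - V (s - ⨆ p : frontier S, infDist (p : EuclideanSpace ℝ (Fin d)) A) := by
  set ε := ⨆ p : frontier S, infDist (p : EuclideanSpace ℝ (Fin d)) A with hε
  have hedist : EMetric.hausdorffEdist S A ≠ ⊤ :=
    hausdorffEdist_ne_top_of_nonempty_of_bounded hSne hAne hS.isBounded hA.isBounded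
  have hh0 : 0 ≤ hausdorffDist S A := hausdorffDist_nonneg
  have hhs : hausdorffDist S A ≤ s := by linarith
  -- boundedness of the sup
  have hbdd : BddAbove (Set.range fun p : frontier S =>
      infDist (p : EuclideanSpace ℝ (Fin d)) A) := by
    have hcf : IsCompact (frontier S) :=
      hS.of_isClosed_subset isClosed_frontier (frontier_subset_closure.trans hS.isClosed.closure_subset)
    have : (Set.range fun p : frontier S => infDist (p : EuclideanSpace ℝ (Fin d)) A)
        = (fun p => infDist p A) '' frontier S := by
      ext y; simp [Set.mem_image]
    rw [this]
    exact (hcf.image (continuous_infDist_pt A)).bddAbove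
  -- key inclusion : cthickening (s - ε) S ⊆ cthickening s A
  have hincl : cthickening (s - ε) S ⊆ cthickening s A := by
    intro x hx
    by_cases hxS : x ∈ S
    · obtain ⟨a, haA, ha⟩ := (hA.isCompact).exists_infDist_eq_dist hAne x
      refine mem_cthickening_of_dist_le x a s A haA ?_
      rw [← ha]
      exact le_trans (infDist_le_hausdorffDist_of_mem hxS hedist) hhs
    · -- nearest point on frontier
      have hne' : (Sᶜ : Set (EuclideanSpace ℝ (Fin d))) ≠ Set.univ := by
        obtain ⟨z, hz⟩ := hSne
        intro h
        have : z ∈ (Sᶜ : Set (EuclideanSpace ℝ (Fin d))) := h ▸ Set.mem_univ z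
        exact this hz
      obtain ⟨y, hyf, hy⟩ := exists_mem_frontier_infDist_compl_eq_dist (s := Sᶜ) hxS hne'
      rw [compl_compl] at hy
      rw [frontier_compl] at hyf
      -- infDist x S ≤ s - ε
      have hpos : 0 < infDist x S := (hS.isClosed.notMem_iff_infDist_pos hSne).1 hxS
      have hle : infDist x S ≤ max (s - ε) 0 := by
        have h1 : EMetric.infEdist x S ≤ ENNReal.ofReal (s - ε) := mem_cthickening_iff.1 hx
        have h2 := ENNReal.toReal_mono ENNReal.ofReal_ne_top h1
        rwa [ENNReal.toReal_ofReal'] at h2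
      have hle' : infDist x S ≤ s - ε := by
        rcases le_total (s - ε) 0 with h | h
        · rw [max_eq_right h] at hle; linarith
        · rwa [max_eq_left h] at hle
      -- y is within ε of A
      have hyε : infDist y A ≤ ε :=
        le_ciSup hbdd (⟨y, hyf⟩ : frontier S)
      obtain ⟨a, haA, ha⟩ := (hA.isCompact).exists_infDist_eq_dist hAne y
      refine mem_cthickening_of_dist_le x a s A haA ?_
      calc dist x a ≤ dist x y + dist y a := dist_triangle x y a
        _ ≤ (s - ε) + ε := by
            have : dist x y ≤ s - ε := by rw [← hy]; exact hle'
            have : dist y a ≤ ε := by rw [← ha]; exact hyε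
            linarith [hle', (ha ▸ hyε : dist y a ≤ ε), (hy ▸ hle' : dist x y ≤ s - ε)]
        _ = s := by ring
  have hfinS : volume (cthickening s S) ≠ ⊤ :=
    (hS.isBounded.cthickening.measure_lt_top).ne
  have hfinA : volume (cthickening s A) ≠ ⊤ :=
    (hA.isBounded.cthickening.measure_lt_top).ne
  constructor
  · have hsub : cthickening s A ⊆ cthickening s S := cthickening_subset_of_subset s hAS
    have : Vn s ≤ V s := by
      rw [hV, hVn]
      exact ENNReal.toReal_mono hfinS (measure_mono hsub)
    linarith
  · have : V (s - ε) ≤ Vn s := by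
      rw [hV, hVn]
      exact ENNReal.toReal_mono hfinA (measure_mono hincl)
    linarith
end

section
/- Let S ⊂ R^d be compact with polynomial reach R, and suppose r_{i_0} < R < r_{i_0+1}. If V restricted to [r_{i_0}, r_{i_0+1}] equals a polynomial of degree at most ℓ ≥ d, then V is a polynomial of degree at most d on [0, r_{i_0+1}], contradicting the definition of R; hence V is not a polynomial of degree at most ℓ on [r_{i_0}, r_{i_0+1}]. -/
open Metric Set MeasureTheory

theorem stmt7 {d : ℕ} (S : Set (EuclideanSpace ℝ (Fin d))) (hS : IsCompact S)
    (V : ℝ → ℝ) (hV : ∀ r, V r = (volume (cthickening r S)).toReal)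
    (R : ℝ)
    (hbdd : BddAbove {r : ℝ | 0 ≤ r ∧ ∃ p : Polynomial ℝ, p.natDegree ≤ d ∧
      ∀ t ∈ Set.Icc (0:ℝ) r, V t = p.eval t})
    (hR : R = sSup {r : ℝ | 0 ≤ r ∧ ∃ p : Polynomial ℝ, p.natDegree ≤ d ∧
      ∀ t ∈ Set.Icc (0:ℝ) r, V t = p.eval t})
    (r r' : ℝ) (ℓ : ℕ) (hdl : d ≤ ℓ) (hr : r < R) (hr' : R < r') :
    ¬ ∃ q : Polynomial ℝ, q.natDegree ≤ ℓ ∧ ∀ t ∈ Set.Icc r r', V t = q.eval t := by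
  set A : Set ℝ := {r : ℝ | 0 ≤ r ∧ ∃ p : Polynomial ℝ, p.natDegree ≤ d ∧
      ∀ t ∈ Set.Icc (0:ℝ) r, V t = p.eval t} with hA
  have hmem0 : (0:ℝ) ∈ A := by
    refine ⟨le_refl 0, Polynomial.C (V 0), by simp, ?_⟩
    intro t ht
    have : t = 0 := le_antisymm ht.2 ht.1
    simp [this]
  have hR0 : 0 ≤ R := hR ▸ le_csSup hbdd hmem0
  rintro ⟨q, hq, hqe⟩
  by_cases hcase : max r 0 < R
  · -- there is s ∈ A with max r 0 < s
    obtain ⟨s, hsA, hs⟩ := exists_lt_of_lt_csSup ⟨0, hmem0⟩ (hR ▸ hcase)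
    obtain ⟨hs0, p, hpd, hpe⟩ := hsA
    have hsR : s ≤ R := hR ▸ le_csSup hbdd ⟨hs0, p, hpd, hpe⟩
    have hab : max r 0 < min s r' := lt_min hs (lt_of_le_of_lt (le_of_lt hcase) hr')
    have hpq : p = q := by
      apply Polynomial.eq_of_infinite_eval_eq
      refine Set.Infinite.mono ?_ (Set.Icc_infinite hab)
      intro x hx
      have hx0s : x ∈ Set.Icc (0:ℝ) s :=
        ⟨le_trans (le_max_right r 0) hx.1, le_trans hx.2 (min_le_left s r')⟩
      have hxrr' : x ∈ Set.Icc r r' :=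
        ⟨le_trans (le_max_left r 0) hx.1, le_trans hx.2 (min_le_right s r')⟩
      have := (hpe x hx0s).symm.trans (hqe x hxrr')
      exact this
    have hr'A : r' ∈ A := by
      refine ⟨le_of_lt (lt_of_le_of_lt hR0 hr'), p, hpd, ?_⟩
      intro t ht
      rcases le_or_gt t s with h | h
      · exact hpe t ⟨ht.1, h⟩
      · have hrt : r ≤ t := le_of_lt (lt_trans (lt_of_le_of_lt (le_max_left r 0) hs) h)
        rw [hpq]; exact hqe t ⟨hrt, ht.2⟩
    have : r' ≤ R := hR ▸ le_csSup hbdd hr'A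
    linarith
  · push_neg at hcase
    have hR0' : R = 0 := by
      rcases le_max_iff.mp hcase with h | h
      · linarith
      · linarith
    have hrneg : r < 0 := by linarith
    have hr'pos : 0 < r' := by linarith
    have hconst : ∀ t : ℝ, t ≤ 0 → V t = V 0 := by
      intro t ht
      rw [hV, hV, cthickening_of_nonpos ht, cthickening_of_nonpos (le_refl 0)]
    have hqC : q = Polynomial.C (V 0) := by
      apply Polynomial.eq_of_infinite_eval_eq
      refine Set.Infinite.mono ?_ (Set.Icc_infinite hrneg)
      intro x hx
      have hxrr' : x ∈ Set.Icc r r' := ⟨hx.1, le_trans hx.2 (le_of_lt hr'pos)⟩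
      have := (hqe x hxrr').symm.trans (hconst x hx.2)
      simpa using this
    have hr'A : r' ∈ A := by
      refine ⟨le_of_lt hr'pos, q, ?_, ?_⟩
      · rw [hqC]; simp
      · intro t ht
        exact hqe t ⟨le_trans (le_of_lt hrneg) ht.1, ht.2⟩
    have : r' ≤ R := hR ▸ le_csSup hbdd hr'A
    linarith
end

section
/- Let X_1, X_2, ... be iid with support a compact set S ⊂ R^d, distribution standard with respect to Lebesgue measure with constant δ, and L_0(∂S) < ∞. Then almost surely, limsup_{n→∞} (n/log n)^{1/d} · max_{p∈∂S} d(p, {X_1,...,X_n}) ≤ (2/(δ ω_d))^{1/d}. -/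
open Metric Set MeasureTheory ENNReal Filter

lemma exists_cover {d : ℕ} (hd : 1 ≤ d) (K : Set (EuclideanSpace ℝ (Fin d)))
    (hK : IsCompact K) :
    ∃ C : ℝ, 0 < C ∧ ∀ r : ℝ, 0 < r → r ≤ 1 → ∃ T : Finset (EuclideanSpace ℝ (Fin d)),
      ↑T ⊆ K ∧ (∀ p ∈ K, ∃ t ∈ T, dist p t < r) ∧ (T.card : ℝ) ≤ C / r ^ d := by
  obtain ⟨M₀, hM₀⟩ := hK.isBounded.subset_closedBall 0
  set M : ℝ := max M₀ 0 with hMdef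
  have hM : K ⊆ closedBall 0 M :=
    hM₀.trans (closedBall_subset_closedBall (le_max_left _ _))
  have hM0 : 0 ≤ M := le_max_right _ _
  refine ⟨(3 * (M + 1)) ^ d, by positivity, fun r hr hr1 => ?_⟩
  -- maximal r-separated subset of K
  obtain ⟨T₀, hT₀⟩ := zorn_subset {T : Set (EuclideanSpace ℝ (Fin d)) |
      T ⊆ K ∧ T.Pairwise fun a b => r ≤ dist a b} (by
    intro c hc hchain
    refine ⟨⋃₀ c, ⟨sUnion_subset fun t ht => (hc ht).1,
      (pairwise_sUnion hchain.directedOn).2 fun t ht => (hc ht).2⟩,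
      fun s hs => subset_sUnion_of_mem hs⟩)
  have hT₀K : T₀ ⊆ K := hT₀.prop.1
  have hT₀sep : T₀.Pairwise fun a b => r ≤ dist a b := hT₀.prop.2
  have hcover : ∀ p ∈ K, ∃ t ∈ T₀, dist p t < r := by
    intro p hp
    by_contra h
    push_neg at h
    have hpT : p ∉ T₀ := fun hpT => absurd (h p hpT) (by simp [hr])
    have hmem : insert p T₀ ∈ {T : Set (EuclideanSpace ℝ (Fin d)) |
        T ⊆ K ∧ T.Pairwise fun a b => r ≤ dist a b} := by
      refine ⟨insert_subset hp hT₀K, (haveI : Std.Symm (α := EuclideanSpace ℝ (Fin d)) (fun a b => r ≤ dist a b) := ⟨?_⟩; pairwise_insert_of_symm.2 ⟨hT₀sep, ?_⟩)⟩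
      · intro a b hab; rwa [dist_comm]
      · intro b hb _; simpa [dist_comm] using h b hb
    exact hpT (hT₀.eq_of_subset hmem (subset_insert _ _) ▸ mem_insert _ _)
  -- T₀ is finite
  obtain ⟨s, hsfin, hscov⟩ := (Metric.totallyBounded_iff.1 hK.totallyBounded) (r/2)
    (by linarith)
  have hfin : T₀.Finite := by
    have hsub : T₀ ⊆ ⋃ y ∈ s, T₀ ∩ ball y (r/2) := by
      intro t ht
      obtain ⟨y, hy, hty⟩ := mem_iUnion₂.1 (hscov (hT₀K ht))
      exact mem_iUnion₂.2 ⟨y, hy, ht, hty⟩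
    refine Finite.subset (hsfin.biUnion fun y _ => ?_) hsub
    refine Set.Subsingleton.finite fun a ha b hb => ?_
    by_contra hab
    have hsep := hT₀sep ha.1 hb.1 hab
    have h1 := ha.2; have h2 := hb.2
    rw [mem_ball] at h1 h2
    have : dist a b < r := by
      calc dist a b ≤ dist a y + dist y b := dist_triangle _ _ _
        _ < r/2 + r/2 := by rw [dist_comm y b]; linarith
        _ = r := by ring
    linarith
  refine ⟨hfin.toFinset, by simpa using hT₀K, by simpa using hcover, ?_⟩
  -- cardinality bound via volume
  set V : ℝ≥0∞ := volume (closedBall (0 : EuclideanSpace ℝ (Fin d)) 1) with hV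
  have hVpos : V ≠ 0 := (measure_closedBall_pos volume _ one_pos).ne'
  have hVtop : V ≠ ⊤ := measure_closedBall_lt_top.ne
  have hdisj : (hfin.toFinset : Set (EuclideanSpace ℝ (Fin d))).PairwiseDisjoint
      (fun t => closedBall t (r/3)) := by
    intro a ha b hb hab
    simp only [Set.Finite.coe_toFinset] at ha hb
    exact closedBall_disjoint_closedBall (by linarith [hT₀sep ha hb hab])
  have hball : ∀ t : EuclideanSpace ℝ (Fin d),
      volume (closedBall t (r/3)) = ENNReal.ofReal ((r/3) ^ d) * V := by
    intro t
    rw [Measure.addHaar_closedBall' volume _ (by linarith), finrank_euclideanSpace_fin]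
  have hvol : ∑ t ∈ hfin.toFinset, volume (closedBall t (r/3))
      ≤ ENNReal.ofReal ((M + 1) ^ d) * V := by
    rw [← measure_biUnion_finset hdisj (fun t _ => measurableSet_closedBall)]
    have hsub : (⋃ t ∈ hfin.toFinset, closedBall t (r/3)) ⊆ closedBall 0 (M + 1) := by
      refine iUnion₂_subset fun t ht => ?_
      have htK : t ∈ K := hT₀K (by simpa using ht)
      intro x hx
      have h3 : dist x (0 : EuclideanSpace ℝ (Fin d)) ≤ dist x t + dist t 0 :=
        dist_triangle _ _ _
      have h1 : dist t 0 ≤ M := hM htK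
      have h2 : dist x t ≤ r/3 := hx
      simp only [mem_closedBall]
      linarith
    calc volume (⋃ t ∈ hfin.toFinset, closedBall t (r/3))
        ≤ volume (closedBall (0 : EuclideanSpace ℝ (Fin d)) (M+1)) := measure_mono hsub
      _ = ENNReal.ofReal ((M + 1) ^ d) * V := by
          rw [Measure.addHaar_closedBall' volume _ (by linarith), finrank_euclideanSpace_fin]
  rw [Finset.sum_congr rfl (fun t _ => hball t), Finset.sum_const, nsmul_eq_mul,
    ← mul_assoc] at hvol
  have hcard : (hfin.toFinset.card : ℝ≥0∞) * ENNReal.ofReal ((r/3) ^ d)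
      ≤ ENNReal.ofReal ((M + 1) ^ d) :=
    (ENNReal.mul_le_mul_iff_left hVpos hVtop).1 hvol
  have hcardR : (hfin.toFinset.card : ℝ) * (r/3) ^ d ≤ (M + 1) ^ d := by
    have h1 : ENNReal.ofReal ((hfin.toFinset.card : ℝ) * (r/3) ^ d)
        ≤ ENNReal.ofReal ((M + 1) ^ d) := by
      rw [ENNReal.ofReal_mul (by positivity), ENNReal.ofReal_natCast]
      exact hcard
    exact (ENNReal.ofReal_le_ofReal_iff (by positivity)).1 h1
  rw [div_pow] at hcardR
  rw [le_div_iff₀ (by positivity)]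
  have h3d : (0:ℝ) < 3 ^ d := by positivity
  calc (hfin.toFinset.card : ℝ) * r ^ d
      = ((hfin.toFinset.card : ℝ) * (r ^ d / 3 ^ d)) * 3 ^ d := by field_simp
    _ ≤ (M + 1) ^ d * 3 ^ d := by nlinarith
    _ = (3 * (M + 1)) ^ d := by rw [mul_pow]; ring

lemma one_sub_ofReal_le_exp {x : ℝ} (hx : 0 ≤ x) :
    (1:ℝ≥0∞) - ENNReal.ofReal x ≤ ENNReal.ofReal (Real.exp (-x)) := by
  rw [← ENNReal.ofReal_one, ← ENNReal.ofReal_sub 1 hx]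
  exact ENNReal.ofReal_le_ofReal (by linarith [Real.add_one_le_exp (-x)])

lemma key13 {d : ℕ} (hd : 1 ≤ d)
    {Ω : Type*} [MeasurableSpace Ω] (P : Measure Ω) [IsProbabilityMeasure P]
    (S : Set (EuclideanSpace ℝ (Fin d))) (hS : IsCompact S)
    (X : ℕ → Ω → EuclideanSpace ℝ (Fin d))
    (hmeas : ∀ i, Measurable (X i))
    (μX : Measure (EuclideanSpace ℝ (Fin d)))
    (hid : ∀ i, Measure.map (X i) P = μX)
    (hindep : ProbabilityTheory.iIndepFun X P)
    (δ lam : ℝ) (hδ : 0 < δ) (hlam : 0 < lam)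
    (hstd : ∀ x ∈ S, ∀ ε : ℝ, 0 < ε → ε ≤ lam →
      ENNReal.ofReal (δ * (volume (closedBall (0 : EuclideanSpace ℝ (Fin d)) 1)).toReal * ε ^ d)
        ≤ μX (closedBall x ε ∩ S))
    (C : ℝ)
    (hC : (2 / (δ * (volume (closedBall (0 : EuclideanSpace ℝ (Fin d)) 1)).toReal)) ^ ((1:ℝ) / d)
      < C) :
    ∀ᵐ ω ∂P, ∀ᶠ n : ℕ in Filter.atTop,
      ((n : ℝ) / Real.log n) ^ ((1:ℝ) / d) *
          ⨆ p : frontier S,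
            infDist (p : EuclideanSpace ℝ (Fin d)) (Set.range fun i : Fin n => X i ω) ≤ C := by
  classical
  have hd0 : (0:ℝ) < (d:ℝ) := by exact_mod_cast hd
  have hd0' : (d:ℝ) ≠ 0 := hd0.ne'
  set W : ℝ := (volume (closedBall (0 : EuclideanSpace ℝ (Fin d)) 1)).toReal with hWdef
  have hW : 0 < W :=
    ENNReal.toReal_pos (measure_closedBall_pos volume _ one_pos).ne' measure_closedBall_lt_top.ne
  set b : ℝ := δ * W with hbdef
  have hb : 0 < b := by positivity
  set R : ℝ := (2 / b) ^ ((1:ℝ)/d) with hRdef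
  have hR : 0 < R := Real.rpow_pos_of_pos (by positivity) _
  -- trivial case: empty frontier
  by_cases hne : (frontier S).Nonempty
  swap
  · refine ae_of_all _ fun ω' => Filter.Eventually.of_forall fun n => ?_
    rw [not_nonempty_iff_eq_empty] at hne
    haveI : IsEmpty ↥(frontier S) := Set.isEmpty_coe_sort.2 hne
    rw [Real.iSup_of_isEmpty, mul_zero]
    exact (hR.trans hC).le
  haveI := hne.to_subtype
  have hfrS : frontier S ⊆ S := hS.isClosed.frontier_subset
  have hfrC : IsCompact (frontier S) :=
    IsCompact.of_isClosed_subset hS isClosed_frontier hfrS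
  obtain ⟨K₀, hK₀, hcov⟩ := exists_cover hd (frontier S) hfrC
  -- constants
  set c : ℝ := (R + C) / 2 with hcdef
  have hc : 0 < c := by rw [hcdef]; linarith
  have hRc : R < c := by rw [hcdef]; linarith
  have hcC : c < C := by rw [hcdef]; linarith
  set θ : ℝ := (C - c) / (2 * c) with hθdef
  have hθ : 0 < θ := by rw [hθdef]; exact div_pos (by linarith) (by linarith)
  have hpow : ∀ x : ℝ, 0 ≤ x → (x ^ ((1:ℝ)/d)) ^ d = x := by
    intro x hx
    rw [← Real.rpow_natCast (x ^ ((1:ℝ)/d)) d, ← Real.rpow_mul hx, one_div,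
      inv_mul_cancel₀ hd0', Real.rpow_one]
  have hRd : R ^ d = 2 / b := hpow _ (by positivity)
  have hcd : 2 / b < c ^ d := by
    rw [← hRd]; exact pow_lt_pow_left₀ hRc hR.le (by omega)
  set a : ℝ := b * c ^ d with hadef
  have ha : 2 < a := by
    have := (div_lt_iff₀ hb).1 hcd
    rw [hadef]; linarith
  set ρ : ℕ → ℝ := fun n => c * (Real.log n / n) ^ ((1:ℝ)/d) with hρdef
  set s : ℕ → ℝ := fun n => θ * ρ n with hsdef
  set G : ℕ → Prop := fun n => 3 ≤ n ∧ ρ n ≤ lam ∧ s n ≤ 1 ∧ 0 < s n with hGdef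
  have hlog1 : ∀ n : ℕ, 3 ≤ n → 1 ≤ Real.log n := by
    intro n hn
    have h3 : Real.exp 1 ≤ 3 := le_trans Real.exp_one_lt_d9.le (by norm_num)
    have hn3 : (3:ℝ) ≤ n := by exact_mod_cast hn
    calc (1:ℝ) = Real.log (Real.exp 1) := (Real.log_exp 1).symm
      _ ≤ Real.log n := Real.log_le_log (Real.exp_pos 1) (h3.trans hn3)
  -- eventually good
  have hev : ∀ᶠ n : ℕ in atTop, G n := by
    have hLtend : Tendsto (fun n : ℕ => Real.log n / n) atTop (nhds 0) :=
      Real.isLittleO_log_id_atTop.tendsto_div_nhds_zero.comp tendsto_natCast_atTop_atTop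
    have hrt : Tendsto (fun n : ℕ => (Real.log n / n) ^ ((1:ℝ)/d)) atTop (nhds 0) := by
      have hcont : ContinuousAt (fun x : ℝ => x ^ ((1:ℝ)/d)) 0 :=
        Real.continuousAt_rpow_const 0 _ (Or.inr (by positivity))
      have := hcont.tendsto.comp hLtend
      simpa [Function.comp_def, Real.zero_rpow (inv_ne_zero hd0'), one_div] using this
    have h1 : ∀ᶠ n : ℕ in atTop, (Real.log n / n) ^ ((1:ℝ)/d) ≤ lam / c :=
      hrt.eventually_le_const (by positivity)
    have h2 : ∀ᶠ n : ℕ in atTop, (Real.log n / n) ^ ((1:ℝ)/d) ≤ 1 / (θ * c) :=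
      hrt.eventually_le_const (by positivity)
    filter_upwards [h1, h2, eventually_ge_atTop 3] with n hn1 hn2 hn3
    have hn0 : (0:ℝ) < n := by
      have : (3:ℝ) ≤ n := by exact_mod_cast hn3
      linarith
    have hln : 1 ≤ Real.log n := hlog1 n hn3
    have hL : 0 < Real.log n / n := div_pos (by linarith) hn0
    refine ⟨hn3, ?_, ?_, ?_⟩
    · have : c * (Real.log n / n) ^ ((1:ℝ)/d) ≤ c * (lam / c) :=
        mul_le_mul_of_nonneg_left hn1 hc.le
      rw [hρdef]; simp only []
      calc c * (Real.log n / n) ^ ((1:ℝ)/d) ≤ c * (lam / c) := this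
        _ = lam := by field_simp
    · rw [hsdef, hρdef]; simp only []
      calc θ * (c * (Real.log n / n) ^ ((1:ℝ)/d)) ≤ θ * (c * (1 / (θ * c))) := by
            refine mul_le_mul_of_nonneg_left (mul_le_mul_of_nonneg_left hn2 hc.le) hθ.le
        _ = 1 := by field_simp
    · rw [hsdef, hρdef]; simp only []
      positivity
  -- nets
  have hTex : ∀ n : ℕ, ∃ T : Finset (EuclideanSpace ℝ (Fin d)),
      (G n → (↑T ⊆ frontier S ∧ (∀ p ∈ frontier S, ∃ t ∈ T, dist p t < s n) ∧
        ((T.card : ℝ) ≤ K₀ / s n ^ d))) ∧ (¬ G n → T = ∅) := by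
    intro n
    by_cases hG : G n
    · obtain ⟨T, h1, h2, h3⟩ := hcov (s n) hG.2.2.2 hG.2.2.1
      exact ⟨T, fun _ => ⟨h1, h2, h3⟩, fun h => absurd hG h⟩
    · exact ⟨∅, fun h => absurd h hG, fun _ => rfl⟩
  choose T hT using hTex
  set A : ℕ → Set Ω := fun n =>
    ⋃ t ∈ T n, ⋂ i ∈ Finset.range n, X i ⁻¹' (closedBall t (ρ n))ᶜ with hA
  haveI hPμX : IsProbabilityMeasure μX := by
    rw [← hid 0]; exact Measure.isProbabilityMeasure_map (hmeas 0).aemeasurable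
  set K₁ : ℝ := K₀ / (θ * c) ^ d with hK₁def
  have hK₁ : 0 < K₁ := by positivity
  set g : ℕ → ℝ := fun n => K₁ * (n:ℝ) ^ ((1:ℝ) - a) with hgdef
  -- the per-ball bound
  have hball : ∀ n : ℕ, G n → ∀ t ∈ T n,
      P (⋂ i ∈ Finset.range n, X i ⁻¹' (closedBall t (ρ n))ᶜ)
        ≤ ENNReal.ofReal ((n:ℝ) ^ (-a)) := by
    intro n hG t ht
    obtain ⟨hTsub, hTcov, hTcard⟩ := (hT n).1 hG
    obtain ⟨hn3, hρlam, hs1, hspos⟩ := hG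
    have hn0 : (0:ℝ) < n := by
      have : (3:ℝ) ≤ n := by exact_mod_cast hn3
      linarith
    have hln : 1 ≤ Real.log n := hlog1 n hn3
    have hL : 0 < Real.log n / n := div_pos (by linarith) hn0
    have hρpos : 0 < ρ n := by
      rw [hρdef]; exact mul_pos hc (Real.rpow_pos_of_pos hL _)
    have htS : t ∈ S := hfrS (hTsub ht)
    have hprod := hindep.meas_biInter (S := Finset.range n)
      (s := fun i => X i ⁻¹' (closedBall t (ρ n))ᶜ)
      (fun i _ => ⟨(closedBall t (ρ n))ᶜ, measurableSet_closedBall.compl, rfl⟩)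
    rw [hprod]
    have hone : ∀ i : ℕ, P (X i ⁻¹' (closedBall t (ρ n))ᶜ)
        = 1 - μX (closedBall t (ρ n)) := by
      intro i
      rw [← Measure.map_apply (hmeas i) measurableSet_closedBall.compl, hid i,
        prob_compl_eq_one_sub measurableSet_closedBall]
    have hq : ENNReal.ofReal (b * ρ n ^ d) ≤ μX (closedBall t (ρ n)) :=
      le_trans (hstd t htS (ρ n) hρpos hρlam)
        (measure_mono inter_subset_left)
    have hstep : (1:ℝ≥0∞) - μX (closedBall t (ρ n))
        ≤ ENNReal.ofReal (Real.exp (-(b * ρ n ^ d))) :=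
      le_trans (tsub_le_tsub_left hq 1) (one_sub_ofReal_le_exp (by positivity))
    calc ∏ i ∈ Finset.range n, P (X i ⁻¹' (closedBall t (ρ n))ᶜ)
        = (1 - μX (closedBall t (ρ n))) ^ n := by
          rw [Finset.prod_congr rfl fun i _ => hone i, Finset.prod_const, Finset.card_range]
      _ ≤ (ENNReal.ofReal (Real.exp (-(b * ρ n ^ d)))) ^ n := pow_le_pow_left' hstep n
      _ = ENNReal.ofReal ((n:ℝ) ^ (-a)) := by
          rw [← ENNReal.ofReal_pow (Real.exp_nonneg _), ← Real.exp_nat_mul]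
          congr 1
          rw [Real.rpow_def_of_pos hn0]
          congr 1
          have hρd : ρ n ^ d = c ^ d * (Real.log n / n) := by
            rw [hρdef]; simp only []
            rw [mul_pow, hpow _ hL.le]
          rw [hρd, hadef]
          field_simp <;> ring
  -- the per-n bound
  have hbound : ∀ n : ℕ, P (A n) ≤ ENNReal.ofReal (g n) := by
    intro n
    by_cases hG : G n
    · obtain ⟨hTsub, hTcov, hTcard⟩ := (hT n).1 hG
      obtain ⟨hn3, hρlam, hs1, hspos⟩ := hG
      have hn0 : (0:ℝ) < n := by
        have : (3:ℝ) ≤ n := by exact_mod_cast hn3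
        linarith
      have hln : 1 ≤ Real.log n := hlog1 n hn3
      have hL : 0 < Real.log n / n := div_pos (by linarith) hn0
      have hsd : s n ^ d = (θ * c) ^ d * (Real.log n / n) := by
        rw [hsdef, hρdef]; simp only []
        rw [← mul_assoc, mul_pow, hpow _ hL.le]
      have hcard : ((T n).card : ℝ) ≤ K₁ * n := by
        refine le_trans hTcard ?_
        rw [hsd, hK₁def]
        have h1 : K₀ / ((θ * c) ^ d * (Real.log n / n)) = K₀ / (θ * c) ^ d * ((n:ℝ) / Real.log n) := by
          field_simp <;> ring
        rw [h1]
        refine mul_le_mul_of_nonneg_left (div_le_self hn0.le hln) (by positivity)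
      calc P (A n) ≤ ∑ t ∈ T n, P (⋂ i ∈ Finset.range n, X i ⁻¹' (closedBall t (ρ n))ᶜ) := by
            rw [hA]; exact measure_biUnion_finset_le _ _
        _ ≤ ∑ _t ∈ T n, ENNReal.ofReal ((n:ℝ) ^ (-a)) :=
            Finset.sum_le_sum fun t ht => hball n ⟨hn3, hρlam, hs1, hspos⟩ t ht
        _ = ((T n).card : ℝ≥0∞) * ENNReal.ofReal ((n:ℝ) ^ (-a)) := by
            rw [Finset.sum_const, nsmul_eq_mul]
        _ ≤ ENNReal.ofReal (K₁ * n) * ENNReal.ofReal ((n:ℝ) ^ (-a)) := by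
            refine mul_le_mul_left ?_ _
            rw [← ENNReal.ofReal_natCast]
            exact ENNReal.ofReal_le_ofReal hcard
        _ = ENNReal.ofReal (g n) := by
            rw [← ENNReal.ofReal_mul (by positivity)]
            congr 1
            rw [hgdef]; simp only []
            rw [mul_assoc]
            congr 1
            rw [sub_eq_add_neg, Real.rpow_add hn0, Real.rpow_one]
    · have hTn : T n = ∅ := (hT n).2 hG
      rw [hA]; simp [hTn]
  -- Borel-Cantelli
  have hsummable : Summable g := ((Real.summable_nat_rpow).2 (by linarith)).mul_left K₁
  have hsum : (∑' n, P (A n)) ≠ ⊤ := by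
    refine ne_top_of_le_ne_top ?_ (ENNReal.tsum_le_tsum hbound)
    rw [← ENNReal.ofReal_tsum_of_nonneg (fun n => by positivity) hsummable]
    exact ENNReal.ofReal_ne_top
  have hae := MeasureTheory.ae_eventually_notMem hsum
  filter_upwards [hae] with ω' hω'
  filter_upwards [hω', hev] with n hn hG
  obtain ⟨hTsub, hTcov, hTcard⟩ := (hT n).1 hG
  obtain ⟨hn3, hρlam, hs1, hspos⟩ := hG
  have hn0 : (0:ℝ) < n := by
    have : (3:ℝ) ≤ n := by exact_mod_cast hn3
    linarith
  have hln : 1 ≤ Real.log n := hlog1 n hn3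
  have hL : 0 < Real.log n / n := div_pos (by linarith) hn0
  have hρpos : 0 < ρ n := by
    rw [hρdef]; exact mul_pos hc (Real.rpow_pos_of_pos hL _)
  have hhit : ∀ t ∈ T n, ∃ i ∈ Finset.range n, X i ω' ∈ closedBall t (ρ n) := by
    intro t ht
    by_contra hcontra
    push_neg at hcontra
    refine hn ?_
    rw [hA]
    refine Set.mem_biUnion ht ?_
    refine Set.mem_iInter₂.2 fun i hi => ?_
    exact hcontra i hi
  have hsup : (⨆ p : frontier S,
      infDist (p : EuclideanSpace ℝ (Fin d)) (Set.range fun i : Fin n => X i ω'))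
      ≤ (1 + θ) * ρ n := by
    refine ciSup_le fun p => ?_
    obtain ⟨t, htT, hpt⟩ := hTcov p p.2
    obtain ⟨i, hi, hXi⟩ := hhit t htT
    have hiF : (⟨i, Finset.mem_range.1 hi⟩ : Fin n) = ⟨i, Finset.mem_range.1 hi⟩ := rfl
    calc infDist (p : EuclideanSpace ℝ (Fin d)) (Set.range fun i : Fin n => X i ω')
        ≤ dist (p : EuclideanSpace ℝ (Fin d)) (X i ω') :=
          infDist_le_dist_of_mem ⟨⟨i, Finset.mem_range.1 hi⟩, rfl⟩
      _ ≤ dist (p : EuclideanSpace ℝ (Fin d)) t + dist t (X i ω') := dist_triangle _ _ _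
      _ ≤ s n + ρ n := by
          refine add_le_add hpt.le ?_
          rw [dist_comm]; exact hXi
      _ = (1 + θ) * ρ n := by rw [hsdef]; ring
  have hq0 : (0:ℝ) ≤ ((n:ℝ) / Real.log n) ^ ((1:ℝ)/d) :=
    Real.rpow_nonneg (by positivity) _
  have hmul1 : ((n:ℝ) / Real.log n) ^ ((1:ℝ)/d) * (Real.log n / n) ^ ((1:ℝ)/d) = 1 := by
    rw [← Real.mul_rpow (by positivity) hL.le]
    have : (n:ℝ) / Real.log n * (Real.log n / n) = 1 := by
      field_simp
    rw [this, Real.one_rpow]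
  calc ((n:ℝ) / Real.log n) ^ ((1:ℝ)/d) *
        ⨆ p : frontier S,
          infDist (p : EuclideanSpace ℝ (Fin d)) (Set.range fun i : Fin n => X i ω')
      ≤ ((n:ℝ) / Real.log n) ^ ((1:ℝ)/d) * ((1 + θ) * ρ n) :=
        mul_le_mul_of_nonneg_left hsup hq0
    _ = (1 + θ) * c := by
        rw [hρdef]; simp only []
        calc ((n:ℝ) / Real.log n) ^ ((1:ℝ)/d) * ((1 + θ) * (c * (Real.log n / n) ^ ((1:ℝ)/d)))
            = (1 + θ) * c * (((n:ℝ) / Real.log n) ^ ((1:ℝ)/d) * (Real.log n / n) ^ ((1:ℝ)/d)) := by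
              ring
          _ = (1 + θ) * c := by rw [hmul1, mul_one]
    _ ≤ C := by
        rw [hθdef]
        have : (1 + (C - c) / (2 * c)) * c = c + (C - c) / 2 := by field_simp
        rw [this]
        linarith

theorem stmt13 {d : ℕ} (hd : 1 ≤ d)
    {Ω : Type*} [MeasurableSpace Ω] (P : Measure Ω) [IsProbabilityMeasure P]
    (S : Set (EuclideanSpace ℝ (Fin d))) (hS : IsCompact S)
    (X : ℕ → Ω → EuclideanSpace ℝ (Fin d))
    (hmeas : ∀ i, Measurable (X i))
    (μX : Measure (EuclideanSpace ℝ (Fin d)))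
    (hid : ∀ i, Measure.map (X i) P = μX)
    (hindep : ProbabilityTheory.iIndepFun X P)
    (hsupp : μX S = 1)
    (δ lam : ℝ) (hδ : 0 < δ) (hlam : 0 < lam)
    (hstd : ∀ x ∈ S, ∀ ε : ℝ, 0 < ε → ε ≤ lam →
      ENNReal.ofReal (δ * (volume (closedBall (0 : EuclideanSpace ℝ (Fin d)) 1)).toReal * ε ^ d)
        ≤ μX (closedBall x ε ∩ S))
    (L0 : ℝ)
    (hL : Filter.Tendsto
      (fun ε : ℝ => (volume (cthickening ε (frontier S))).toReal / (2 * ε))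
      (nhdsWithin 0 (Set.Ioi 0)) (nhds L0)) :
    ∀ᵐ ω ∂P, Filter.limsup
        (fun n : ℕ => ((n : ℝ) / Real.log n) ^ ((1:ℝ) / d) *
          ⨆ p : frontier S,
            infDist (p : EuclideanSpace ℝ (Fin d)) (Set.range fun i : Fin n => X i ω))
        Filter.atTop
      ≤ (2 / (δ * (volume (closedBall (0 : EuclideanSpace ℝ (Fin d)) 1)).toReal)) ^ ((1:ℝ) / d) := by
  set R : ℝ := (2 / (δ * (volume (closedBall (0 : EuclideanSpace ℝ (Fin d)) 1)).toReal)) ^ ((1:ℝ) / d) with hRdef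
  have hkey : ∀ k : ℕ, ∀ᵐ ω ∂P, ∀ᶠ n : ℕ in Filter.atTop,
      ((n : ℝ) / Real.log n) ^ ((1:ℝ) / d) *
          ⨆ p : frontier S,
            infDist (p : EuclideanSpace ℝ (Fin d)) (Set.range fun i : Fin n => X i ω)
        ≤ R + ((k:ℝ) + 1)⁻¹ := by
    intro k
    exact key13 hd P S hS X hmeas μX hid hindep δ lam hδ hlam hstd (R + ((k:ℝ) + 1)⁻¹)
      (lt_add_of_pos_right _ (by positivity))
  rw [← ae_all_iff] at hkey
  filter_upwards [hkey] with ω hω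
  have hcb : Filter.IsCoboundedUnder (· ≤ ·) Filter.atTop
      (fun n : ℕ => ((n : ℝ) / Real.log n) ^ ((1:ℝ) / d) *
        ⨆ p : frontier S,
          infDist (p : EuclideanSpace ℝ (Fin d)) (Set.range fun i : Fin n => X i ω)) :=
    Filter.isCoboundedUnder_le_of_eventually_le Filter.atTop
      (Filter.Eventually.of_forall fun n => mul_nonneg (Real.rpow_nonneg (by positivity) _)
        (Real.iSup_nonneg fun p => infDist_nonneg))
  refine le_of_forall_pos_le_add fun ε hε => ?_
  obtain ⟨k, hk⟩ := exists_nat_one_div_lt hε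
  calc Filter.limsup _ Filter.atTop ≤ R + ((k:ℝ) + 1)⁻¹ := Filter.limsup_le_of_le hcb (hω k)
    _ ≤ R + ε := by
      rw [one_div] at hk
      linarith
end

section
/- The closed unit disk in R^2 with an open quadrant sector removed, S_P = {x ∈ R^2 : ‖x‖ ≤ 1} \ {(x,y) : x > 0, y > 0}, has volume function V(t) = 3π/4 + 2(1 + 3π/4)t + (5π/4 - 1)t^2 for all 0 ≤ t ≤ 1. -/
open Metric Set MeasureTheory

set_option maxHeartbeats 1000000
noncomputable section
namespace S16
abbrev E2 := EuclideanSpace ℝ (Fin 2)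

def φ : E2 ≃ᵐ ℝ × ℝ :=
  (MeasurableEquiv.toLp 2 (Fin 2 → ℝ)).symm.trans (MeasurableEquiv.finTwoArrow)

lemma φ_apply (p : E2) : φ p = (p 0, p 1) := rfl

lemma φ_mp : MeasurePreserving φ :=
  (volume_preserving_finTwoArrow ℝ).comp (EuclideanSpace.volume_preserving_symm_measurableEquiv_toLp (Fin 2))

def pt (a b : ℝ) : E2 := (WithLp.equiv 2 (Fin 2 → ℝ)).symm ![a, b]

lemma pt_0 (a b : ℝ) : pt a b 0 = a := rfl
lemma pt_1 (a b : ℝ) : pt a b 1 = b := rfl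
lemma zero_0 : (0 : E2) 0 = 0 := rfl
lemma zero_1 : (0 : E2) 1 = 0 := rfl

lemma dist_le_iff {p q : E2} {c : ℝ} (hc : 0 ≤ c) :
    dist p q ≤ c ↔ (p 0 - q 0) ^ 2 + (p 1 - q 1) ^ 2 ≤ c ^ 2 := by
  rw [EuclideanSpace.dist_eq, Real.sqrt_le_left hc, Fin.sum_univ_two]
  simp [Real.dist_eq, sq_abs]



def Dsk (r : ℝ) : Set (ℝ × ℝ) := {q | q.1 ^ 2 + q.2 ^ 2 ≤ r ^ 2}
def Qd (r : ℝ) : Set (ℝ × ℝ) := {q | q.1 ^ 2 + q.2 ^ 2 ≤ r ^ 2 ∧ 0 ≤ q.1 ∧ 0 ≤ q.2}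

lemma isClosed_Dsk (r : ℝ) : IsClosed (Dsk r) :=
  isClosed_le (by fun_prop) continuous_const
lemma isClosed_Qd (r : ℝ) : IsClosed (Qd r) := by
  have : Qd r = Dsk r ∩ ({q : ℝ × ℝ | 0 ≤ q.1} ∩ {q | 0 ≤ q.2}) := rfl
  rw [this]
  exact (isClosed_Dsk r).inter ((isClosed_le continuous_const (by fun_prop)).inter
    (isClosed_le continuous_const (by fun_prop)))


lemma vol_Dsk {r : ℝ} (hr : 0 ≤ r) : volume (Dsk r) = ENNReal.ofReal (Real.pi * r ^ 2) := by
  have hpre : closedBall (0 : E2) r = φ ⁻¹' (Dsk r) := by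
    ext p
    simp only [mem_closedBall, mem_preimage, φ_apply, Dsk, mem_setOf_eq]
    rw [dist_le_iff hr]
    norm_num
  have h1 := φ_mp.measure_preimage (isClosed_Dsk r).measurableSet.nullMeasurableSet
  rw [← hpre] at h1
  rw [← h1, EuclideanSpace.volume_closedBall]
  simp only [Fintype.card_fin]
  rw [show ((2 : ℕ) : ℝ) / 2 + 1 = 2 by norm_num, Real.Gamma_two,
    Real.sq_sqrt Real.pi_nonneg, ← ENNReal.ofReal_pow hr, ← ENNReal.ofReal_mul (by positivity)]
  ring_nf


-- null lines
lemma null_v (c : ℝ) : volume {q : ℝ × ℝ | q.1 = c} = 0 := by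
  have : {q : ℝ × ℝ | q.1 = c} = ({c} : Set ℝ) ×ˢ (univ : Set ℝ) := by
    ext ⟨a, b⟩; simp [eq_comm]
  rw [this, Measure.volume_eq_prod, Measure.prod_prod]
  simp
lemma null_h (c : ℝ) : volume {q : ℝ × ℝ | q.2 = c} = 0 := by
  have : {q : ℝ × ℝ | q.2 = c} = (univ : Set ℝ) ×ˢ ({c} : Set ℝ) := by
    ext ⟨a, b⟩; simp [eq_comm]
  rw [this, Measure.volume_eq_prod, Measure.prod_prod]
  simp

-- measure preserving reflections
lemma mp_reflx : MeasurePreserving (fun q : ℝ × ℝ => (-q.1, q.2)) volume volume := by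
  rw [Measure.volume_eq_prod]
  exact (Measure.measurePreserving_neg volume).prod (MeasurePreserving.id volume)
lemma mp_refly : MeasurePreserving (fun q : ℝ × ℝ => (q.1, -q.2)) volume volume := by
  rw [Measure.volume_eq_prod]
  exact (MeasurePreserving.id volume).prod (Measure.measurePreserving_neg volume)
lemma mp_reflxy : MeasurePreserving (fun q : ℝ × ℝ => (-q.1, -q.2)) volume volume := by
  rw [Measure.volume_eq_prod]
  exact (Measure.measurePreserving_neg volume).prod (Measure.measurePreserving_neg volume)
lemma mp_trx : MeasurePreserving (fun q : ℝ × ℝ => (q.1 + 1, q.2)) volume volume := by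
  rw [Measure.volume_eq_prod]
  exact (measurePreserving_add_right volume 1).prod (MeasurePreserving.id volume)
lemma mp_try : MeasurePreserving (fun q : ℝ × ℝ => (q.1, q.2 + 1)) volume volume := by
  rw [Measure.volume_eq_prod]
  exact (MeasurePreserving.id volume).prod (measurePreserving_add_right volume 1)

def Q2 (r : ℝ) : Set (ℝ × ℝ) := {q | q.1 ^ 2 + q.2 ^ 2 ≤ r ^ 2 ∧ q.1 ≤ 0 ∧ 0 ≤ q.2}
def Q3 (r : ℝ) : Set (ℝ × ℝ) := {q | q.1 ^ 2 + q.2 ^ 2 ≤ r ^ 2 ∧ q.1 ≤ 0 ∧ q.2 ≤ 0}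
def Q4 (r : ℝ) : Set (ℝ × ℝ) := {q | q.1 ^ 2 + q.2 ^ 2 ≤ r ^ 2 ∧ 0 ≤ q.1 ∧ q.2 ≤ 0}

lemma vol_Q2 (r : ℝ) : volume (Q2 r) = volume (Qd r) := by
  have h : Q2 r = (fun q : ℝ × ℝ => (-q.1, q.2)) ⁻¹' (Qd r) := by
    ext ⟨a, b⟩
    simp only [Q2, Qd, mem_setOf_eq, mem_preimage, neg_sq]
    constructor <;> rintro ⟨h1, h2, h3⟩ <;> exact ⟨h1, by linarith, h3⟩
  rw [h, mp_reflx.measure_preimage (isClosed_Qd r).measurableSet.nullMeasurableSet]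
lemma vol_Q3 (r : ℝ) : volume (Q3 r) = volume (Qd r) := by
  have h : Q3 r = (fun q : ℝ × ℝ => (-q.1, -q.2)) ⁻¹' (Qd r) := by
    ext ⟨a, b⟩
    simp only [Q3, Qd, mem_setOf_eq, mem_preimage, neg_sq]
    constructor <;> rintro ⟨h1, h2, h3⟩ <;> exact ⟨h1, by linarith, by linarith⟩
  rw [h, mp_reflxy.measure_preimage (isClosed_Qd r).measurableSet.nullMeasurableSet]
lemma vol_Q4 (r : ℝ) : volume (Q4 r) = volume (Qd r) := by
  have h : Q4 r = (fun q : ℝ × ℝ => (q.1, -q.2)) ⁻¹' (Qd r) := by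
    ext ⟨a, b⟩
    simp only [Q4, Qd, mem_setOf_eq, mem_preimage, neg_sq]
    constructor <;> rintro ⟨h1, h2, h3⟩ <;> exact ⟨h1, h2, by linarith⟩
  rw [h, mp_refly.measure_preimage (isClosed_Qd r).measurableSet.nullMeasurableSet]

lemma null_axes : volume ({q : ℝ × ℝ | q.1 = 0} ∪ {q | q.2 = 0}) = 0 :=
  measure_union_null (null_v 0) (null_h 0)

lemma vol_add {s t : Set (ℝ × ℝ)} (ht : MeasurableSet t) (h : volume (s ∩ t) = 0) :
    volume (s ∪ t) = volume s + volume t :=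
  measure_union₀ ht.nullMeasurableSet h

lemma isClosed_Q2 (r : ℝ) : IsClosed (Q2 r) := by
  have : Q2 r = Dsk r ∩ ({q : ℝ × ℝ | q.1 ≤ 0} ∩ {q | 0 ≤ q.2}) := rfl
  rw [this]
  exact (isClosed_Dsk r).inter ((isClosed_le (by fun_prop) continuous_const).inter
    (isClosed_le continuous_const (by fun_prop)))
lemma isClosed_Q3 (r : ℝ) : IsClosed (Q3 r) := by
  have : Q3 r = Dsk r ∩ ({q : ℝ × ℝ | q.1 ≤ 0} ∩ {q | q.2 ≤ 0}) := rfl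
  rw [this]
  exact (isClosed_Dsk r).inter ((isClosed_le (by fun_prop) continuous_const).inter
    (isClosed_le (by fun_prop) continuous_const))
lemma isClosed_Q4 (r : ℝ) : IsClosed (Q4 r) := by
  have : Q4 r = Dsk r ∩ ({q : ℝ × ℝ | 0 ≤ q.1} ∩ {q | q.2 ≤ 0}) := rfl
  rw [this]
  exact (isClosed_Dsk r).inter ((isClosed_le continuous_const (by fun_prop)).inter
    (isClosed_le (by fun_prop) continuous_const))

lemma vol_Qd {r : ℝ} (hr : 0 ≤ r) : volume (Qd r) = ENNReal.ofReal (Real.pi * r ^ 2 / 4) := by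
  have hcover : Dsk r = Qd r ∪ Q2 r ∪ Q3 r ∪ Q4 r := by
    ext ⟨a, b⟩
    simp only [Dsk, Qd, Q2, Q3, Q4, mem_union, mem_setOf_eq]
    constructor
    · intro h
      rcases le_total 0 a with ha | ha <;> rcases le_total 0 b with hb | hb
      · exact Or.inl (Or.inl (Or.inl ⟨h, ha, hb⟩))
      · exact Or.inr ⟨h, ha, hb⟩
      · exact Or.inl (Or.inl (Or.inr ⟨h, ha, hb⟩))
      · exact Or.inl (Or.inr ⟨h, ha, hb⟩)
    · rintro (((⟨h, -⟩ | ⟨h, -⟩) | ⟨h, -⟩) | ⟨h, -⟩) <;> exact h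
  have n1 : volume ((Qd r ∪ Q2 r) ∩ Q3 r) = 0 := by
    refine measure_mono_null ?_ null_axes
    rintro ⟨a, b⟩ ⟨h1 | h1, h2⟩
    · exact Or.inr (le_antisymm h2.2.2 h1.2.2)
    · exact Or.inr (le_antisymm h2.2.2 h1.2.2)
  have n2 : volume ((Qd r ∪ Q2 r ∪ Q3 r) ∩ Q4 r) = 0 := by
    refine measure_mono_null ?_ null_axes
    rintro ⟨a, b⟩ ⟨(h1 | h1) | h1, h2⟩
    · exact Or.inr (le_antisymm h2.2.2 h1.2.2)
    · exact Or.inl (le_antisymm h1.2.1 h2.2.1)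
    · exact Or.inl (le_antisymm h1.2.1 h2.2.1)
  have n0 : volume (Qd r ∩ Q2 r) = 0 := by
    refine measure_mono_null ?_ null_axes
    rintro ⟨a, b⟩ ⟨h1, h2⟩
    exact Or.inl (le_antisymm h2.2.1 h1.2.1)
  have key : ENNReal.ofReal (Real.pi * r ^ 2) = 4 * volume (Qd r) := by
    rw [← vol_Dsk hr, hcover, vol_add (isClosed_Q4 r).measurableSet n2,
      vol_add (isClosed_Q3 r).measurableSet n1, vol_add (isClosed_Q2 r).measurableSet n0,
      vol_Q2, vol_Q3, vol_Q4]
    ring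
  have h4 : ENNReal.ofReal (Real.pi * r ^ 2) = 4 * ENNReal.ofReal (Real.pi * r ^ 2 / 4) := by
    rw [show ((4 : ENNReal)) = ENNReal.ofReal (4 : ℝ) by norm_num,
      ← ENNReal.ofReal_mul (by norm_num)]
    ring_nf
  rw [h4] at key
  exact ((ENNReal.mul_right_inj (by norm_num) (by norm_num)).mp key.symm)

def E2' := EuclideanSpace ℝ (Fin 2)

def SP : Set (EuclideanSpace ℝ (Fin 2)) :=
  (closedBall (0 : EuclideanSpace ℝ (Fin 2)) 1) \
    {p : EuclideanSpace ℝ (Fin 2) | 0 < p 0 ∧ 0 < p 1}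

lemma isOpen_quad : IsOpen {p : EuclideanSpace ℝ (Fin 2) | 0 < p 0 ∧ 0 < p 1} := by
  have h0 : Continuous fun p : EuclideanSpace ℝ (Fin 2) => p 0 :=
    (EuclideanSpace.proj (0 : Fin 2)).continuous
  have h1 : Continuous fun p : EuclideanSpace ℝ (Fin 2) => p 1 :=
    (EuclideanSpace.proj (1 : Fin 2)).continuous
  exact (isOpen_lt continuous_const h0).inter (isOpen_lt continuous_const h1)

lemma SP_compact : IsCompact SP :=
  (isCompact_closedBall _ _).diff isOpen_quad

lemma mem_cthick_iff {t : ℝ} (ht : 0 ≤ t) (p : E2) :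
    p ∈ cthickening t SP ↔ ∃ q ∈ SP, dist p q ≤ t := by
  rw [SP_compact.cthickening_eq_biUnion_closedBall ht]
  simp [mem_iUnion, mem_closedBall]

def AA (t : ℝ) : Set (ℝ × ℝ) :=
  {q | q.1 ^ 2 + q.2 ^ 2 ≤ (1 + t) ^ 2 ∧ (q.1 ≤ 0 ∨ q.2 ≤ 0)}
def R1 (t : ℝ) : Set (ℝ × ℝ) := Icc (0:ℝ) 1 ×ˢ Icc (0:ℝ) t
def R2 (t : ℝ) : Set (ℝ × ℝ) := Icc (0:ℝ) t ×ˢ Icc t 1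
def C1 (t : ℝ) : Set (ℝ × ℝ) := {q | (q.1 - 1) ^ 2 + q.2 ^ 2 ≤ t ^ 2 ∧ 1 ≤ q.1 ∧ 0 ≤ q.2}
def C2 (t : ℝ) : Set (ℝ × ℝ) := {q | q.1 ^ 2 + (q.2 - 1) ^ 2 ≤ t ^ 2 ∧ 0 ≤ q.1 ∧ 1 ≤ q.2}

lemma isClosed_AA (t : ℝ) : IsClosed (AA t) := by
  have : AA t = Dsk (1 + t) ∩ ({q : ℝ × ℝ | q.1 ≤ 0} ∪ {q | q.2 ≤ 0}) := rfl
  rw [this]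
  exact (isClosed_Dsk _).inter ((isClosed_le (by fun_prop) continuous_const).union
    (isClosed_le (by fun_prop) continuous_const))
lemma isClosed_C1 (t : ℝ) : IsClosed (C1 t) := by
  have : C1 t = {q : ℝ × ℝ | (q.1 - 1) ^ 2 + q.2 ^ 2 ≤ t ^ 2} ∩
      ({q : ℝ × ℝ | 1 ≤ q.1} ∩ {q | 0 ≤ q.2}) := rfl
  rw [this]
  exact (isClosed_le (by fun_prop) continuous_const).inter
    ((isClosed_le continuous_const (by fun_prop)).inter (isClosed_le continuous_const (by fun_prop)))
lemma isClosed_C2 (t : ℝ) : IsClosed (C2 t) := by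
  have : C2 t = {q : ℝ × ℝ | q.1 ^ 2 + (q.2 - 1) ^ 2 ≤ t ^ 2} ∩
      ({q : ℝ × ℝ | 0 ≤ q.1} ∩ {q | 1 ≤ q.2}) := rfl
  rw [this]
  exact (isClosed_le (by fun_prop) continuous_const).inter
    ((isClosed_le continuous_const (by fun_prop)).inter (isClosed_le continuous_const (by fun_prop)))

lemma main_eq {t : ℝ} (ht0 : 0 ≤ t) (ht1 : t ≤ 1) :
    cthickening t SP = φ ⁻¹' (AA t ∪ R1 t ∪ R2 t ∪ C1 t ∪ C2 t) := by
  ext p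
  rw [mem_cthick_iff ht0, mem_preimage, φ_apply]
  simp only [mem_union]
  constructor
  · rintro ⟨q, ⟨hq1, hq2⟩, hdist⟩
    have hq : (q 0) ^ 2 + (q 1) ^ 2 ≤ 1 := by
      have := (dist_le_iff (by norm_num : (0:ℝ) ≤ 1)).mp (mem_closedBall.mp hq1)
      simpa [zero_0, zero_1] using this
    have hd : (p 0 - q 0) ^ 2 + (p 1 - q 1) ^ 2 ≤ t ^ 2 := (dist_le_iff ht0).mp hdist
    by_cases hp : 0 < p 0 ∧ 0 < p 1
    · rcases not_and_or.mp hq2 with ha | hb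
      · -- q 0 ≤ 0
        have ha : q 0 ≤ 0 := not_lt.mp ha
        have hb1 : q 1 ≤ 1 := by nlinarith [sq_nonneg (q 0)]
        have hx : (p 0) ^ 2 ≤ t ^ 2 - (p 1 - q 1) ^ 2 := by
          nlinarith [mul_nonneg (neg_nonneg.mpr ha) hp.1.le]
        by_cases hy1 : p 1 ≤ 1
        · have hxt : p 0 ≤ t := by nlinarith [sq_nonneg (p 1 - q 1)]
          by_cases hyt : p 1 ≤ t
          · exact Or.inl (Or.inl (Or.inl (Or.inr ⟨⟨hp.1.le, le_trans hxt ht1⟩, hp.2.le, hyt⟩)))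
          · exact Or.inl (Or.inl (Or.inr ⟨⟨hp.1.le, hxt⟩, (not_le.mp hyt).le, hy1⟩))
        · refine Or.inr ⟨?_, hp.1.le, (not_le.mp hy1).le⟩
          have : (p 1 - 1) ^ 2 ≤ (p 1 - q 1) ^ 2 := by
            nlinarith [mul_nonneg (by linarith : (0:ℝ) ≤ 1 - q 1)
              (by linarith : (0:ℝ) ≤ 2 * p 1 - q 1 - 1)]
          nlinarith
      · -- q 1 ≤ 0
        have hb : q 1 ≤ 0 := not_lt.mp hb
        have ha1 : q 0 ≤ 1 := by nlinarith [sq_nonneg (q 1)]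
        have hy : (p 1) ^ 2 ≤ t ^ 2 - (p 0 - q 0) ^ 2 := by
          nlinarith [mul_nonneg (neg_nonneg.mpr hb) hp.2.le]
        by_cases hx1 : p 0 ≤ 1
        · have hyt : p 1 ≤ t := by nlinarith [sq_nonneg (p 0 - q 0)]
          exact Or.inl (Or.inl (Or.inl (Or.inr ⟨⟨hp.1.le, hx1⟩, hp.2.le, hyt⟩)))
        · refine Or.inl (Or.inr ⟨?_, (not_le.mp hx1).le, hp.2.le⟩)
          have : (p 0 - 1) ^ 2 ≤ (p 0 - q 0) ^ 2 := by
            nlinarith [mul_nonneg (by linarith : (0:ℝ) ≤ 1 - q 0)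
              (by linarith : (0:ℝ) ≤ 2 * p 0 - q 0 - 1)]
          nlinarith
    · -- p not in open quadrant : AA
      refine Or.inl (Or.inl (Or.inl (Or.inl ⟨?_, ?_⟩)))
      · have htr : dist p 0 ≤ 1 + t := by
          calc dist p 0 ≤ dist p q + dist q 0 := dist_triangle p q 0
          _ ≤ t + 1 := add_le_add hdist (mem_closedBall.mp hq1)
          _ = 1 + t := by ring
        have := (dist_le_iff (by linarith : (0:ℝ) ≤ 1 + t)).mp htr
        simpa [zero_0, zero_1] using this
      · rcases not_and_or.mp hp with h | h
        · exact Or.inl (not_lt.mp h)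
        · exact Or.inr (not_lt.mp h)
  · rintro ((((hA | hR1) | hR2) | hC1) | hC2)
    · -- AA
      obtain ⟨hball, hsign⟩ := hA
      have hpball : p ∈ closedBall (0 : EuclideanSpace ℝ (Fin 2)) (t + 1) := by
        refine mem_closedBall.mpr ((dist_le_iff (by linarith : (0:ℝ) ≤ t + 1)).mpr ?_)
        simp only [zero_0, zero_1, sub_zero]
        nlinarith
      rw [← cthickening_closedBall ht0 (by norm_num : (0:ℝ) ≤ 1) (0 : EuclideanSpace ℝ (Fin 2)),
        (isCompact_closedBall _ _).cthickening_eq_biUnion_closedBall ht0] at hpball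
      simp only [mem_iUnion, mem_closedBall, exists_prop] at hpball
      obtain ⟨q, hq1, hdq⟩ := hpball
      have hq : (q 0) ^ 2 + (q 1) ^ 2 ≤ 1 := by
        have := (dist_le_iff (by norm_num : (0:ℝ) ≤ 1)).mp (mem_closedBall.mp hq1)
        simpa [zero_0, zero_1] using this
      have hd : (p 0 - q 0) ^ 2 + (p 1 - q 1) ^ 2 ≤ t ^ 2 := (dist_le_iff ht0).mp hdq
      by_cases hq2 : 0 < q 0 ∧ 0 < q 1
      · rcases hsign with hx | hy
        · refine ⟨pt 0 (q 1), ⟨?_, ?_⟩, ?_⟩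
          · refine mem_closedBall.mpr ((dist_le_iff (by norm_num : (0:ℝ) ≤ 1)).mpr ?_)
            simp only [pt_0, pt_1, zero_0, zero_1, sub_zero]
            nlinarith [sq_nonneg (q 0)]
          · simp [pt_0]
          · refine (dist_le_iff ht0).mpr ?_
            simp only [pt_0, pt_1, sub_zero]
            nlinarith [mul_nonneg (neg_nonneg.mpr hx) hq2.1.le]
        · refine ⟨pt (q 0) 0, ⟨?_, ?_⟩, ?_⟩
          · refine mem_closedBall.mpr ((dist_le_iff (by norm_num : (0:ℝ) ≤ 1)).mpr ?_)
            simp only [pt_0, pt_1, zero_0, zero_1, sub_zero]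
            nlinarith [sq_nonneg (q 1)]
          · simp [pt_1]
          · refine (dist_le_iff ht0).mpr ?_
            simp only [pt_0, pt_1, sub_zero]
            nlinarith [mul_nonneg (neg_nonneg.mpr hy) hq2.2.le]
      · exact ⟨q, ⟨hq1, hq2⟩, hdq⟩
    · -- R1
      obtain ⟨⟨hx0, hx1⟩, hy0, hyt⟩ := hR1
      refine ⟨pt (p 0) 0, ⟨?_, ?_⟩, ?_⟩
      · refine mem_closedBall.mpr ((dist_le_iff (by norm_num : (0:ℝ) ≤ 1)).mpr ?_)
        simp only [pt_0, pt_1, zero_0, zero_1, sub_zero]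
        nlinarith
      · simp [pt_1]
      · refine (dist_le_iff ht0).mpr ?_
        simp only [pt_0, pt_1, sub_self, sub_zero]
        nlinarith
    · -- R2
      obtain ⟨⟨hx0, hxt⟩, hyt, hy1⟩ := hR2
      refine ⟨pt 0 (p 1), ⟨?_, ?_⟩, ?_⟩
      · refine mem_closedBall.mpr ((dist_le_iff (by norm_num : (0:ℝ) ≤ 1)).mpr ?_)
        simp only [pt_0, pt_1, zero_0, zero_1, sub_zero]
        nlinarith [le_trans ht0 hyt]
      · simp [pt_0]
      · refine (dist_le_iff ht0).mpr ?_
        simp only [pt_0, pt_1, sub_self, sub_zero]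
        nlinarith
    · -- C1
      obtain ⟨hball, hx1, hy0⟩ := hC1
      refine ⟨pt 1 0, ⟨?_, ?_⟩, ?_⟩
      · refine mem_closedBall.mpr ((dist_le_iff (by norm_num : (0:ℝ) ≤ 1)).mpr ?_)
        simp [pt_0, pt_1, zero_0, zero_1]
      · simp [pt_1]
      · refine (dist_le_iff ht0).mpr ?_
        simpa [pt_0, pt_1] using hball
    · -- C2
      obtain ⟨hball, hx0, hy1⟩ := hC2
      refine ⟨pt 0 1, ⟨?_, ?_⟩, ?_⟩
      · refine mem_closedBall.mpr ((dist_le_iff (by norm_num : (0:ℝ) ≤ 1)).mpr ?_)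
        simp [pt_0, pt_1, zero_0, zero_1]
      · simp [pt_0]
      · refine (dist_le_iff ht0).mpr ?_
        simpa [pt_0, pt_1] using hball

lemma vol_AA {t : ℝ} (ht0 : 0 ≤ t) :
    volume (AA t) = ENNReal.ofReal (3 * (Real.pi * (1 + t) ^ 2) / 4) := by
  have hcover : AA t = Q2 (1 + t) ∪ Q3 (1 + t) ∪ Q4 (1 + t) := by
    ext ⟨a, b⟩
    simp only [AA, Q2, Q3, Q4, mem_union, mem_setOf_eq]
    constructor
    · rintro ⟨h, hx | hy⟩
      · rcases le_total 0 b with hb | hb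
        · exact Or.inl (Or.inl ⟨h, hx, hb⟩)
        · exact Or.inl (Or.inr ⟨h, hx, hb⟩)
      · rcases le_total 0 a with ha | ha
        · exact Or.inr ⟨h, ha, hy⟩
        · exact Or.inl (Or.inr ⟨h, ha, hy⟩)
    · rintro ((⟨h, ha, -⟩ | ⟨h, ha, -⟩) | ⟨h, -, hb⟩)
      · exact ⟨h, Or.inl ha⟩
      · exact ⟨h, Or.inl ha⟩
      · exact ⟨h, Or.inr hb⟩
  have n1 : volume (Q2 (1 + t) ∩ Q3 (1 + t)) = 0 := by
    refine measure_mono_null ?_ null_axes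
    rintro ⟨a, b⟩ ⟨h1, h2⟩
    exact Or.inr (le_antisymm h2.2.2 h1.2.2)
  have n2 : volume ((Q2 (1 + t) ∪ Q3 (1 + t)) ∩ Q4 (1 + t)) = 0 := by
    refine measure_mono_null ?_ null_axes
    rintro ⟨a, b⟩ ⟨h1 | h1, h2⟩
    · exact Or.inl (le_antisymm h1.2.1 h2.2.1)
    · exact Or.inl (le_antisymm h1.2.1 h2.2.1)
  rw [hcover, vol_add (isClosed_Q4 _).measurableSet n2, vol_add (isClosed_Q3 _).measurableSet n1,
    vol_Q2, vol_Q3, vol_Q4, vol_Qd (by linarith : (0:ℝ) ≤ 1 + t),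
    ← ENNReal.ofReal_add (by positivity) (by positivity),
    ← ENNReal.ofReal_add (by positivity) (by positivity)]
  ring_nf

lemma vol_R1 {t : ℝ} (ht0 : 0 ≤ t) : volume (R1 t) = ENNReal.ofReal t := by
  rw [R1, Measure.volume_eq_prod, Measure.prod_prod, Real.volume_Icc, Real.volume_Icc,
    ← ENNReal.ofReal_mul (by norm_num)]
  norm_num

lemma vol_R2 {t : ℝ} (ht0 : 0 ≤ t) : volume (R2 t) = ENNReal.ofReal (t * (1 - t)) := by
  rw [R2, Measure.volume_eq_prod, Measure.prod_prod, Real.volume_Icc, Real.volume_Icc, sub_zero,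
    ← ENNReal.ofReal_mul ht0]

lemma vol_C1 {t : ℝ} (ht0 : 0 ≤ t) : volume (C1 t) = ENNReal.ofReal (Real.pi * t ^ 2 / 4) := by
  have h : Qd t = (fun q : ℝ × ℝ => (q.1 + 1, q.2)) ⁻¹' (C1 t) := by
    ext ⟨a, b⟩
    simp only [Qd, C1, mem_setOf_eq, mem_preimage]
    constructor
    · rintro ⟨h1, h2, h3⟩
      refine ⟨by ring_nf; ring_nf at h1; linarith, by linarith, h3⟩
    · rintro ⟨h1, h2, h3⟩
      refine ⟨by ring_nf; ring_nf at h1; linarith, by linarith, h3⟩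
  rw [← vol_Qd ht0, h, mp_trx.measure_preimage (isClosed_C1 t).measurableSet.nullMeasurableSet]

lemma vol_C2 {t : ℝ} (ht0 : 0 ≤ t) : volume (C2 t) = ENNReal.ofReal (Real.pi * t ^ 2 / 4) := by
  have h : Qd t = (fun q : ℝ × ℝ => (q.1, q.2 + 1)) ⁻¹' (C2 t) := by
    ext ⟨a, b⟩
    simp only [Qd, C2, mem_setOf_eq, mem_preimage]
    constructor
    · rintro ⟨h1, h2, h3⟩
      refine ⟨by ring_nf; ring_nf at h1; linarith, h2, by linarith⟩
    · rintro ⟨h1, h2, h3⟩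
      refine ⟨by ring_nf; ring_nf at h1; linarith, h2, by linarith⟩
  rw [← vol_Qd ht0, h, mp_try.measure_preimage (isClosed_C2 t).measurableSet.nullMeasurableSet]

end S16

open S16 in
theorem stmt16 :
    ∀ t ∈ Set.Icc (0:ℝ) 1,
      (volume (cthickening t
          ((closedBall (0 : EuclideanSpace ℝ (Fin 2)) 1) \
            {p : EuclideanSpace ℝ (Fin 2) | 0 < p 0 ∧ 0 < p 1}))).toReal
        = 3 * Real.pi / 4 + 2 * (1 + 3 * Real.pi / 4) * t + (5 * Real.pi / 4 - 1) * t ^ 2 := by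
  rintro t ⟨ht0, ht1⟩
  have hset : cthickening t
      ((closedBall (0 : EuclideanSpace ℝ (Fin 2)) 1) \
        {p : EuclideanSpace ℝ (Fin 2) | 0 < p 0 ∧ 0 < p 1})
      = φ ⁻¹' (AA t ∪ R1 t ∪ R2 t ∪ C1 t ∪ C2 t) := main_eq ht0 ht1
  have hmR1 : MeasurableSet (R1 t) := (isClosed_Icc.prod isClosed_Icc).measurableSet
  have hmR2 : MeasurableSet (R2 t) := (isClosed_Icc.prod isClosed_Icc).measurableSet
  have hmeas : MeasurableSet (AA t ∪ R1 t ∪ R2 t ∪ C1 t ∪ C2 t) :=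
    ((((isClosed_AA t).measurableSet.union hmR1).union hmR2).union
      (isClosed_C1 t).measurableSet).union (isClosed_C2 t).measurableSet
  rw [hset, φ_mp.measure_preimage hmeas.nullMeasurableSet]
  have nullN : ∀ c : ℝ, volume ({q : ℝ × ℝ | q.1 = 0} ∪ {q | q.2 = 0} ∪ {q | q.1 = c} ∪
      {q | q.2 = c}) = 0 := fun c =>
    measure_union_null (measure_union_null (measure_union_null (null_v 0) (null_h 0))
      (null_v c)) (null_h c)
  have n1 : volume (AA t ∩ R1 t) = 0 := by
    refine measure_mono_null ?_ null_axes
    rintro ⟨a, b⟩ ⟨⟨-, hx | hy⟩, ⟨ha, -⟩, hb, -⟩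
    · exact Or.inl (le_antisymm hx ha)
    · exact Or.inr (le_antisymm hy hb)
  have n2 : volume ((AA t ∪ R1 t) ∩ R2 t) = 0 := by
    refine measure_mono_null ?_ (nullN t)
    rintro ⟨a, b⟩ ⟨hA | hR, ⟨ha, -⟩, hbt, -⟩
    · rcases hA.2 with hx | hy
      · exact Or.inl (Or.inl (Or.inl (le_antisymm hx ha)))
      · exact Or.inl (Or.inl (Or.inr (le_antisymm hy (le_trans ht0 hbt))))
    · exact Or.inr (le_antisymm hR.2.2 hbt)
  have n3 : volume ((AA t ∪ R1 t ∪ R2 t) ∩ C1 t) = 0 := by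
    refine measure_mono_null ?_ (nullN 1)
    rintro ⟨a, b⟩ ⟨(hA | hR1) | hR2, -, ha1, hb0⟩
    · rcases hA.2 with hx | hy
      · exact absurd (le_trans ha1 hx) (by norm_num)
      · exact Or.inl (Or.inl (Or.inr (le_antisymm hy hb0)))
    · exact Or.inl (Or.inr (le_antisymm hR1.1.2 ha1))
    · exact Or.inl (Or.inr (le_antisymm (le_trans hR2.1.2 ht1) ha1))
  have n4 : volume ((AA t ∪ R1 t ∪ R2 t ∪ C1 t) ∩ C2 t) = 0 := by
    refine measure_mono_null ?_ (nullN 1)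
    rintro ⟨a, b⟩ ⟨((hA | hR1) | hR2) | hC1, hd, ha0, hb1⟩
    · rcases hA.2 with hx | hy
      · exact Or.inl (Or.inl (Or.inl (le_antisymm hx ha0)))
      · exact absurd (le_trans hb1 hy) (by norm_num)
    · exact Or.inr (le_antisymm (le_trans hR1.2.2 ht1) hb1)
    · exact Or.inr (le_antisymm hR2.2.2 hb1)
    · refine Or.inr (le_antisymm ?_ hb1)
      nlinarith [hC1.1, sq_nonneg (a - 1)]
  rw [vol_add (isClosed_C2 t).measurableSet n4, vol_add (isClosed_C1 t).measurableSet n3,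
    vol_add hmR2 n2, vol_add hmR1 n1, vol_AA ht0, vol_R1 ht0, vol_R2 ht0, vol_C1 ht0, vol_C2 ht0,
    ← ENNReal.ofReal_add (by positivity) (by positivity),
    ← ENNReal.ofReal_add (by positivity) (by nlinarith),
    ← ENNReal.ofReal_add (by nlinarith [Real.pi_nonneg]) (by positivity),
    ← ENNReal.ofReal_add (by nlinarith [Real.pi_nonneg]) (by positivity),
    ENNReal.toReal_ofReal (by nlinarith [Real.pi_nonneg])]
  ring
end
end
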